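/- For every finite simple graph G with γ_t(G) ≥ 3 and every minimum total dominating set D of G: if D contains three vertices forming a (not necessarily induced) path P_3, then a single edge contraction suffices to decrease γ_t, i.e., ct_{γ_t}(G) = 1. -/
import Mathlib


open SimpleGraph

/-- `D` is a total dominating set of `G`: every vertex has a neighbour in `D`. -/
def IsTotalDomSet {V : Type*} (G : SimpleGraph V) (D : Set V) : Prop :=
  ∀ v : V, ∃ u ∈ D, G.Adj u v

/-- `x` and `y` are (distinct or not) at distance at most two:
adjacent or joined through a common neighbour. -/
def WithinTwo {V : Type*} (G : SimpleGraph V) (x y : V) : Prop :=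
  G.Adj x y ∨ ∃ z, G.Adj x z ∧ G.Adj z y

/-- `x` and `y` are at distance exactly two. -/
def DistTwo {V : Type*} (G : SimpleGraph V) (x y : V) : Prop :=
  x ≠ y ∧ ¬ G.Adj x y ∧ ∃ z, G.Adj x z ∧ G.Adj z y

/-- `D` is a semitotal dominating set of `G`: a dominating set in which every
vertex of `D` has another vertex of `D` within distance two (a witness). -/
def IsSemitotalDomSet {V : Type*} (G : SimpleGraph V) (D : Set V) : Prop :=
  (∀ v : V, v ∉ D → ∃ u ∈ D, G.Adj u v) ∧
  (∀ x ∈ D, ∃ y ∈ D, y ≠ x ∧ WithinTwo G x y)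

/-- The total domination number `γ_t`. -/
noncomputable def totalDomNum {V : Type*} (G : SimpleGraph V) [Fintype V] : ℕ :=
  sInf {n | ∃ D : Set V, IsTotalDomSet G D ∧ D.ncard = n}

/-- The semitotal domination number `γ_{t2}`. -/
noncomputable def semitotalDomNum {V : Type*} (G : SimpleGraph V) [Fintype V] : ℕ :=
  sInf {n | ∃ D : Set V, IsSemitotalDomSet G D ∧ D.ncard = n}

/-- The graph obtained from `G` by contracting the edge `xy`:
delete `y` and merge it into `x`. -/
def contractEdge {V : Type*} (G : SimpleGraph V) (x y : V) :
    SimpleGraph {v : V // v ≠ y} :=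
  SimpleGraph.fromRel (fun a b =>
    G.Adj a.1 b.1 ∨ (a.1 = x ∧ G.Adj y b.1) ∨ (b.1 = x ∧ G.Adj y a.1))

/-- A bundled finite simple graph. -/
structure FGraph : Type 1 where
  V : Type
  fin : Fintype V
  G : SimpleGraph V

attribute [instance] FGraph.fin

noncomputable def FGraph.tdn (A : FGraph) : ℕ := totalDomNum A.G

noncomputable def FGraph.stdn (A : FGraph) : ℕ := semitotalDomNum A.G

/-- `B` is obtained from `A` by contracting a single edge. -/
def FGraph.Contract (A B : FGraph) : Prop :=
  ∃ x y : A.V, A.G.Adj x y ∧ ∃ e : B.V ≃ {v : A.V // v ≠ y},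
    ∀ a b : B.V, B.G.Adj a b ↔ (contractEdge A.G x y).Adj (e a) (e b)

/-- `B` is obtained from `A` by a sequence of `n` edge contractions. -/
inductive ContractStar : ℕ → FGraph → FGraph → Prop
  | refl (A : FGraph) : ContractStar 0 A A
  | step {n : ℕ} {A B C : FGraph} : A.Contract B → ContractStar n B C →
      ContractStar (n + 1) A C

/-- At most `k` edge contractions suffice to decrease the total domination number by one. -/
def ctTDLe (A : FGraph) (k : ℕ) : Prop :=
  ∃ n ≤ k, ∃ B : FGraph, ContractStar n A B ∧ B.tdn = A.tdn - 1

/-- At most `k` edge contractions suffice to decrease the semitotal domination number by one. -/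
def ctSTLe (A : FGraph) (k : ℕ) : Prop :=
  ∃ n ≤ k, ∃ B : FGraph, ContractStar n A B ∧ B.stdn = A.stdn - 1

/-- `ct_{γ_t}`: the minimum number of edge contractions needed to decrease `γ_t` by one. -/
noncomputable def ctTDNum (A : FGraph) : ℕ :=
  sInf {n | ∃ B : FGraph, ContractStar n A B ∧ B.tdn = A.tdn - 1}

/-- `ct_{γ_{t2}}`: the minimum number of edge contractions needed to decrease `γ_{t2}` by one. -/
noncomputable def ctSTNum (A : FGraph) : ℕ :=
  sInf {n | ∃ B : FGraph, ContractStar n A B ∧ B.stdn = A.stdn - 1}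

/-- Disjoint union of two simple graphs. -/
def disjGraphUnion {α β : Type*} (G : SimpleGraph α) (H : SimpleGraph β) :
    SimpleGraph (α ⊕ β) :=
  SimpleGraph.fromRel (fun a b =>
    match a, b with
    | Sum.inl a, Sum.inl b => G.Adj a b
    | Sum.inr a, Sum.inr b => H.Adj a b
    | _, _ => False)

lemma contract_adj {V : Type*} (G : SimpleGraph V) (x y : V)
    (a b : {v : V // v ≠ y}) :
    (contractEdge G x y).Adj a b ↔ (a : V) ≠ b ∧
      (G.Adj a b ∨ ((a : V) = x ∧ G.Adj y b) ∨ ((b : V) = x ∧ G.Adj y a)) := by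
  unfold contractEdge
  rw [SimpleGraph.fromRel_adj]
  constructor
  · rintro ⟨hne, h⟩
    refine ⟨fun h' => hne (Subtype.ext h'), ?_⟩
    rcases h with (h | h | h) | (h | h | h)
    · exact Or.inl h
    · exact Or.inr (Or.inl h)
    · exact Or.inr (Or.inr h)
    · exact Or.inl h.symm
    · exact Or.inr (Or.inr h)
    · exact Or.inr (Or.inl h)
  · rintro ⟨hne, h⟩
    exact ⟨fun h' => hne (congrArg Subtype.val h'), Or.inl h⟩

lemma upper_aux' {V : Type*} [Fintype V] (G : SimpleGraph V) (D : Set V)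
    (hD : IsTotalDomSet G D) {x y z : V} (hx : x ∈ D) (hy : y ∈ D) (hz : z ∈ D)
    (hxz : x ≠ z) (hxy : G.Adj x y) (hyz : G.Adj y z) :
    ∃ D' : Set {v : V // v ≠ y}, IsTotalDomSet (contractEdge G x y) D' ∧
      D'.ncard = D.ncard - 1 := by
  classical
  refine ⟨{v | v.1 ∈ D}, ?_, ?_⟩
  · intro v
    obtain ⟨u, hu, hadj⟩ := hD v.1
    by_cases huy : u = y
    · subst huy
      by_cases hvx : v.1 = x
      · refine ⟨⟨z, hyz.ne'⟩, hz, ?_⟩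
        rw [contract_adj]
        exact ⟨fun h => hxz (hvx ▸ h.symm), Or.inr (Or.inr ⟨hvx, hyz⟩)⟩
      · refine ⟨⟨x, hxy.ne⟩, hx, ?_⟩
        rw [contract_adj]
        exact ⟨fun h => hvx h.symm, Or.inr (Or.inl ⟨rfl, hadj⟩)⟩
    · exact ⟨⟨u, huy⟩, hu, by rw [contract_adj]; exact ⟨hadj.ne, Or.inl hadj⟩⟩
  · have himg : Subtype.val '' {v : {v : V // v ≠ y} | v.1 ∈ D} = D \ {y} := by
      ext w
      constructor
      · rintro ⟨⟨w', hw'⟩, hmem, rfl⟩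
        exact ⟨hmem, hw'⟩
      · rintro ⟨hwD, hwy⟩
        exact ⟨⟨w, hwy⟩, hwD, rfl⟩
    calc ({v : {v : V // v ≠ y} | v.1 ∈ D}).ncard
        = (Subtype.val '' {v : {v : V // v ≠ y} | v.1 ∈ D}).ncard :=
          (Set.ncard_image_of_injective _ Subtype.val_injective).symm
      _ = (D \ {y}).ncard := by rw [himg]
      _ = D.ncard - 1 := Set.ncard_diff_singleton_of_mem hy

lemma lower_aux {V : Type*} [Fintype V] (G : SimpleGraph V) {x y : V} (hxy : G.Adj x y)
    (DH : Set {v : V // v ≠ y}) (hDH : IsTotalDomSet (contractEdge G x y) DH) :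
    ∃ DG : Set V, IsTotalDomSet G DG ∧ DG.ncard ≤ DH.ncard + 1 := by
  classical
  set S : Set V := Subtype.val '' DH with hS
  have hScard : S.ncard = DH.ncard := Set.ncard_image_of_injective _ Subtype.val_injective
  by_cases hc : x ∈ S ∨ ∃ u ∈ S, G.Adj y u
  · refine ⟨insert y S, ?_, ?_⟩
    · intro v
      by_cases hv : v = y
      · subst hv
        rcases hc with hxS | ⟨u, hu, hadj⟩
        · exact ⟨x, Set.mem_insert_of_mem _ hxS, hxy⟩
        · exact ⟨u, Set.mem_insert_of_mem _ hu, hadj.symm⟩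
      · obtain ⟨u, hu, hadj⟩ := hDH ⟨v, hv⟩
        rw [contract_adj] at hadj
        obtain ⟨hne, h | ⟨hux, hyv⟩ | ⟨hvx, hyu⟩⟩ := hadj
        · exact ⟨u.1, Set.mem_insert_of_mem _ ⟨u, hu, rfl⟩, h⟩
        · exact ⟨y, Set.mem_insert _ _, hyv⟩
        · exact ⟨y, Set.mem_insert _ _, by rw [show v = x from hvx]; exact hxy.symm⟩
    · calc (insert y S).ncard ≤ S.ncard + 1 := Set.ncard_insert_le _ _
        _ = DH.ncard + 1 := by rw [hScard]
  · push_neg at hc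
    obtain ⟨hxS, hyadj⟩ := hc
    refine ⟨insert x S, ?_, ?_⟩
    · intro v
      by_cases hv : v = y
      · subst hv
        exact ⟨x, Set.mem_insert _ _, hxy⟩
      · obtain ⟨u, hu, hadj⟩ := hDH ⟨v, hv⟩
        rw [contract_adj] at hadj
        obtain ⟨hne, h | ⟨hux, hyv⟩ | ⟨hvx, hyu⟩⟩ := hadj
        · exact ⟨u.1, Set.mem_insert_of_mem _ ⟨u, hu, rfl⟩, h⟩
        · exact absurd (show x ∈ S from hux ▸ ⟨u, hu, rfl⟩) hxS
        · exact absurd hyu (hyadj u.1 ⟨u, hu, rfl⟩)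
    · calc (insert x S).ncard ≤ S.ncard + 1 := Set.ncard_insert_le _ _
        _ = DH.ncard + 1 := by rw [hScard]

/-- If `γ_t(G) ≥ 3` and a minimum total dominating set `D` of `G` contains a not
necessarily induced `P₃`, then `ct_{γ_t}(G) = 1`. -/
theorem stmt11 (A : FGraph) (h3 : 3 ≤ A.tdn) (D : Set A.V)
    (hD : IsTotalDomSet A.G D) (hmin : D.ncard = A.tdn)
    (hP3 : ∃ x y z, x ∈ D ∧ y ∈ D ∧ z ∈ D ∧ x ≠ z ∧ A.G.Adj x y ∧ A.G.Adj y z) :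
    ctTDNum A = 1 := by
  classical
  obtain ⟨x, y, z, hx, hy, hz, hxz, hxy, hyz⟩ := hP3
  haveI : Fintype {v : A.V // v ≠ y} := Subtype.fintype _
  set B : FGraph := ⟨{v : A.V // v ≠ y}, inferInstance, contractEdge A.G x y⟩ with hB
  have hcontr : A.Contract B := ⟨x, y, hxy, Equiv.refl _, fun a b => Iff.rfl⟩
  obtain ⟨D', hD', hD'card⟩ := upper_aux' A.G D hD hx hy hz hxz hxy hyz
  have hle : B.tdn ≤ A.tdn - 1 := by
    have hmem : A.tdn - 1 ∈ {n | ∃ DD : Set B.V, IsTotalDomSet B.G DD ∧ DD.ncard = n} :=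
      ⟨D', hD', by rw [hD'card, hmin]⟩
    exact Nat.sInf_le hmem
  have hnonempty : {n | ∃ DD : Set B.V, IsTotalDomSet B.G DD ∧ DD.ncard = n}.Nonempty :=
    ⟨D'.ncard, D', hD', rfl⟩
  obtain ⟨DH, hDHdom, hDHcard⟩ := Nat.sInf_mem hnonempty
  obtain ⟨DG, hDGdom, hDGcard⟩ := lower_aux A.G hxy DH hDHdom
  have hge : A.tdn ≤ B.tdn + 1 := by
    have h1 : A.tdn ≤ DG.ncard := Nat.sInf_le ⟨DG, hDGdom, rfl⟩
    have h2 : DH.ncard = B.tdn := hDHcard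
    omega
  have htdnB : B.tdn = A.tdn - 1 := by omega
  have h1mem : 1 ∈ {n | ∃ C : FGraph, ContractStar n A C ∧ C.tdn = A.tdn - 1} :=
    ⟨B, ContractStar.step hcontr (ContractStar.refl B), htdnB⟩
  unfold ctTDNum
  refine le_antisymm (Nat.sInf_le h1mem) ?_
  rw [Nat.one_le_iff_ne_zero]
  intro h0
  rcases Nat.sInf_eq_zero.mp h0 with h | h
  · obtain ⟨C, hC, hCt⟩ := h
    cases hC
    omega
  · rw [h] at h1mem
    exact h1mem
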